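/- For every natural number n and every real number r ≠ 0, the function R_n is twice differentiable at r and satisfies the Bessel-type differential equation R_n''(r) - (2n / r) · R_n'(r) + R_n(r) = 0. -/

import Mathlib

open MeasureTheory intervalIntegral

/-- Hermite's integral `R_n(r) = ∫_0^r ((r² - x²)ⁿ / (2ⁿ n!)) cos x dx`. -/
noncomputable def R (n : ℕ) (r : ℝ) : ℝ :=
  ∫ x in (0:ℝ)..r, ((r ^ 2 - x ^ 2) ^ n / (2 ^ n * n.factorial)) * Real.cos x

open Filter Metric Topology

noncomputable def G (n : ℕ) (r : ℝ) : ℝ :=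
  ∫ t in (0:ℝ)..1, (1 - t ^ 2) ^ n * Real.cos (r * t)

noncomputable def G1 (n : ℕ) (r : ℝ) : ℝ :=
  ∫ t in (0:ℝ)..1, -((1 - t ^ 2) ^ n * (Real.sin (r * t) * t))

noncomputable def G2 (n : ℕ) (r : ℝ) : ℝ :=
  ∫ t in (0:ℝ)..1, -((1 - t ^ 2) ^ n * (Real.cos (r * t) * t * t))

lemma bound_aux {n : ℕ} {t : ℝ} (ht : t ∈ Set.uIoc (0:ℝ) 1) (u : ℝ) (hu : |u| ≤ 1) :
    ‖(1 - t ^ 2) ^ n * (u * t)‖ ≤ 1 := by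
  rw [Set.uIoc_of_le zero_le_one] at ht
  obtain ⟨ht0, ht1⟩ := ht
  rw [Real.norm_eq_abs, abs_mul, abs_mul, abs_pow]
  have h1 : |1 - t ^ 2| ≤ 1 := by rw [abs_le]; constructor <;> nlinarith
  have h2 : |1 - t ^ 2| ^ n ≤ 1 := pow_le_one₀ (abs_nonneg _) h1
  have h3 : |t| ≤ 1 := by rw [abs_le]; constructor <;> linarith
  have h4 : |u| * |t| ≤ 1 := by nlinarith [abs_nonneg u, abs_nonneg t]
  nlinarith [abs_nonneg u, abs_nonneg t, mul_nonneg (abs_nonneg u) (abs_nonneg t),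
    pow_nonneg (abs_nonneg (1 - t ^ 2)) n]

lemma hasDerivAt_G (n : ℕ) (r : ℝ) : HasDerivAt (G n) (G1 n r) r := by
  have c1 : ∀ x : ℝ, Continuous fun t : ℝ => (1 - t ^ 2) ^ n * Real.cos (x * t) := by
    intro x; fun_prop
  have c2 : ∀ x : ℝ, Continuous fun t : ℝ =>
      -((1 - t ^ 2) ^ n * (Real.sin (x * t) * t)) := by intro x; fun_prop
  have key := intervalIntegral.hasDerivAt_integral_of_dominated_loc_of_deriv_le
    (μ := volume) (a := (0:ℝ)) (b := 1) (x₀ := r) (s := Metric.ball r 1)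
    (F := fun x t => (1 - t ^ 2) ^ n * Real.cos (x * t))
    (F' := fun x t => -((1 - t ^ 2) ^ n * (Real.sin (x * t) * t)))
    (bound := fun _ => 1) (Metric.ball_mem_nhds r one_pos)
    (Eventually.of_forall fun x => (c1 x).aestronglyMeasurable)
    ((c1 r).intervalIntegrable 0 1)
    ((c2 r).aestronglyMeasurable)
    (Eventually.of_forall fun t ht x _ => by
      show ‖-((1 - t ^ 2) ^ n * (Real.sin (x * t) * t))‖ ≤ 1
      rw [norm_neg]; exact bound_aux ht _ (Real.abs_sin_le_one _))
    (((continuous_const : Continuous fun _ : ℝ => (1:ℝ))).intervalIntegrable 0 1)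
    (Eventually.of_forall fun t ht x _ => by
      have h1 : HasDerivAt (fun y : ℝ => y * t) t x := by
        simpa using (hasDerivAt_id x).mul_const t
      have h2 : HasDerivAt (fun y : ℝ => Real.cos (y * t))
          (-Real.sin (x * t) * t) x := by
          have := (Real.hasDerivAt_cos (x * t)).comp x h1; exact this
      have h3 := h2.const_mul ((1 - t ^ 2) ^ n)
      convert h3 using 1
      rfl
      ring)
  exact key.2

lemma hasDerivAt_G1 (n : ℕ) (r : ℝ) : HasDerivAt (G1 n) (G2 n r) r := by
  have c1 : ∀ x : ℝ, Continuous fun t : ℝ =>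
      -((1 - t ^ 2) ^ n * (Real.sin (x * t) * t)) := by intro x; fun_prop
  have c2 : ∀ x : ℝ, Continuous fun t : ℝ =>
      -((1 - t ^ 2) ^ n * (Real.cos (x * t) * t * t)) := by intro x; fun_prop
  have key := intervalIntegral.hasDerivAt_integral_of_dominated_loc_of_deriv_le
    (μ := volume) (a := (0:ℝ)) (b := 1) (x₀ := r) (s := Metric.ball r 1)
    (F := fun x t => -((1 - t ^ 2) ^ n * (Real.sin (x * t) * t)))
    (F' := fun x t => -((1 - t ^ 2) ^ n * (Real.cos (x * t) * t * t)))
    (bound := fun _ => 1) (Metric.ball_mem_nhds r one_pos)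
    (Eventually.of_forall fun x => (c1 x).aestronglyMeasurable)
    ((c1 r).intervalIntegrable 0 1)
    ((c2 r).aestronglyMeasurable)
    (Eventually.of_forall fun t ht x _ => by
      show ‖-((1 - t ^ 2) ^ n * (Real.cos (x * t) * t * t))‖ ≤ 1
      rw [norm_neg]
      have he : (1 - t ^ 2) ^ n * (Real.cos (x * t) * t * t)
          = (1 - t ^ 2) ^ n * ((Real.cos (x * t) * t) * t) := by ring
      rw [he]
      refine bound_aux ht _ ?_
      rw [abs_mul]
      rw [Set.uIoc_of_le zero_le_one] at ht
      have hc := Real.abs_cos_le_one (x * t)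
      have h3 : |t| ≤ 1 := by
        rw [abs_le]; exact ⟨by linarith [ht.1], ht.2⟩
      nlinarith [abs_nonneg (Real.cos (x * t)), abs_nonneg t])
    (((continuous_const : Continuous fun _ : ℝ => (1:ℝ))).intervalIntegrable 0 1)
    (Eventually.of_forall fun t ht x _ => by
      have h1 : HasDerivAt (fun y : ℝ => y * t) t x := by
        simpa using (hasDerivAt_id x).mul_const t
      have h2 : HasDerivAt (fun y : ℝ => Real.sin (y * t))
          (Real.cos (x * t) * t) x := by
          have := (Real.hasDerivAt_sin (x * t)).comp x h1; exact this
      exact ((h2.mul_const t).const_mul ((1 - t ^ 2) ^ n)).neg)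
  exact key.2

lemma key_identity (n : ℕ) (r : ℝ) :
    r * (G2 n r + G n r) + (2 * (n:ℝ) + 2) * G1 n r = 0 := by
  have c0 : Continuous fun t : ℝ => (1 - t ^ 2) ^ n * Real.cos (r * t) := by fun_prop
  have c1 : Continuous fun t : ℝ => -((1 - t ^ 2) ^ n * (Real.sin (r * t) * t)) := by
    fun_prop
  have c2 : Continuous fun t : ℝ => -((1 - t ^ 2) ^ n * (Real.cos (r * t) * t * t)) := by
    fun_prop
  have c3 : Continuous fun t : ℝ => (1 - t ^ 2) ^ (n + 1) * Real.cos (r * t) := by fun_prop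
  have hsum : G2 n r + G n r = ∫ t in (0:ℝ)..1, (1 - t ^ 2) ^ (n+1) * Real.cos (r * t) := by
    rw [G2, G, ← intervalIntegral.integral_add (c2.intervalIntegrable 0 1)
      (c0.intervalIntegrable 0 1)]
    apply intervalIntegral.integral_congr
    intro t _
    ring
  set h' : ℝ → ℝ := fun t => ((n:ℝ)+1) * (1 - t^2)^n * (-(2*t)) * Real.sin (r*t)
      + (1 - t^2)^(n+1) * (Real.cos (r*t) * r) with hh'
  have hderiv : ∀ t ∈ Set.uIcc (0:ℝ) 1,
      HasDerivAt (fun t => (1 - t^2)^(n+1) * Real.sin (r*t)) (h' t) t := by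
    intro t _
    have hbase : HasDerivAt (fun t : ℝ => 1 - t^2) (-(2*t)) t := by
      simpa using ((hasDerivAt_pow 2 t).const_sub 1)
    have hp : HasDerivAt (fun t : ℝ => (1 - t^2)^(n+1))
        (((n:ℝ)+1) * (1-t^2)^n * (-(2*t))) t := by
      have := hbase.pow (n+1)
      simp at this; rw [mul_neg]; exact this
    have hs : HasDerivAt (fun t : ℝ => Real.sin (r*t)) (Real.cos (r*t) * r) t := by
      have h1 : HasDerivAt (fun y : ℝ => r * y) r t := by
        simpa using (hasDerivAt_id t).const_mul r
      exact (Real.hasDerivAt_sin (r*t)).comp t h1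
    exact hp.mul hs
  have hint : IntervalIntegrable h' volume 0 1 := by
    apply Continuous.intervalIntegrable; rw [hh']; fun_prop
  have hFTC := intervalIntegral.integral_eq_sub_of_hasDerivAt hderiv hint
  have hFTC0 : (∫ t in (0:ℝ)..1, h' t) = 0 := by
    rw [hFTC]; norm_num
  have hL : r * (G2 n r + G n r) + (2 * (n:ℝ) + 2) * G1 n r
      = ∫ t in (0:ℝ)..1, h' t := by
    rw [hsum, G1, ← intervalIntegral.integral_const_mul,
      ← intervalIntegral.integral_const_mul,
      ← intervalIntegral.integral_add
        (f := fun t => r * ((1 - t ^ 2) ^ (n + 1) * Real.cos (r * t)))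
        (g := fun t => (2 * (n:ℝ) + 2) * -((1 - t ^ 2) ^ n * (Real.sin (r * t) * t)))
        ((continuous_const.mul c3).intervalIntegrable 0 1)
        ((continuous_const.mul c1).intervalIntegrable 0 1)]
    apply intervalIntegral.integral_congr
    intro t _
    rw [hh']
    push_cast
    ring
  rw [hL, hFTC0]

noncomputable def FF (n : ℕ) (x : ℝ) : ℝ :=
  x ^ (2*n+1) * G n x / (2 ^ n * n.factorial)

noncomputable def FF1 (n : ℕ) (x : ℝ) : ℝ :=
  ((2*(n:ℝ)+1) * x^(2*n) * G n x + x^(2*n+1) * G1 n x) / (2 ^ n * n.factorial)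

noncomputable def FF2 (n : ℕ) (x : ℝ) : ℝ :=
  ((2*(n:ℝ)+1) * ((2*(n:ℝ)) * x^(2*n-1)) * G n x + (2*(n:ℝ)+1) * x^(2*n) * G1 n x
    + ((2*(n:ℝ)+1) * x^(2*n) * G1 n x + x^(2*n+1) * G2 n x)) / (2 ^ n * n.factorial)

lemma R_eq (n : ℕ) {r : ℝ} (hr : r ≠ 0) : R n r = FF n r := by
  have hsub := intervalIntegral.integral_comp_mul_right
      (fun x => ((r ^ 2 - x ^ 2) ^ n / (2 ^ n * n.factorial)) * Real.cos x)
      (a := (0:ℝ)) (b := 1) hr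
  rw [zero_mul, one_mul] at hsub
  have h1 : (∫ x in (0:ℝ)..r, ((r ^ 2 - x ^ 2) ^ n / (2 ^ n * n.factorial)) * Real.cos x)
      = r • ∫ t in (0:ℝ)..1,
          ((r ^ 2 - (t*r) ^ 2) ^ n / (2 ^ n * n.factorial)) * Real.cos (t*r) := by
    rw [hsub, smul_smul, mul_inv_cancel₀ hr, one_smul]
  have h2 : (∫ t in (0:ℝ)..1, ((r ^ 2 - (t*r) ^ 2) ^ n / (2 ^ n * (n.factorial:ℝ))) * Real.cos (t*r))
      = (r^(2*n) / (2 ^ n * (n.factorial:ℝ))) * G n r := by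
    rw [G, ← intervalIntegral.integral_const_mul]
    apply intervalIntegral.integral_congr
    intro t _
    have h3 : r ^ 2 - (t*r)^2 = r^2 * (1 - t^2) := by ring
    dsimp only
    rw [h3, mul_pow, ← pow_mul, mul_comm t r]
    ring
  rw [R, h1, h2, FF, smul_eq_mul]
  ring

lemma hasDerivAt_FF (n : ℕ) (x : ℝ) : HasDerivAt (FF n) (FF1 n x) x := by
  have h := ((hasDerivAt_pow (2*n+1) x).mul (hasDerivAt_G n x)).div_const
    ((2:ℝ) ^ n * n.factorial)
  convert h using 1
  · rfl
  · rfl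
  · rfl
  rw [FF1]
  simp only [Nat.add_sub_cancel]
  push_cast
  ring

lemma hasDerivAt_FF1 (n : ℕ) (x : ℝ) : HasDerivAt (FF1 n) (FF2 n x) x := by
  have h := ((((hasDerivAt_pow (2*n) x).const_mul (2*(n:ℝ)+1)).mul (hasDerivAt_G n x)).add
    ((hasDerivAt_pow (2*n+1) x).mul (hasDerivAt_G1 n x))).div_const ((2:ℝ) ^ n * n.factorial)
  convert h using 1
  · rfl
  · rfl
  · rfl
  rw [FF2]
  simp only [Nat.add_sub_cancel]
  push_cast
  ring

lemma ode_FF (n : ℕ) {r : ℝ} (hr : r ≠ 0) :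
    FF2 n r - (2*(n:ℝ)/r) * FF1 n r + FF n r = 0 := by
  have hC : ((2:ℝ)^n * n.factorial) ≠ 0 := by positivity
  have key := key_identity n r
  rw [FF, FF1, FF2]
  have hpow : (2*(n:ℝ)) * r^(2*n-1) = (2*(n:ℝ)) * r^(2*n) / r := by
    cases n with
    | zero => simp
    | succ m =>
      have h1 : 2*(m+1) - 1 + 1 = 2*(m+1) := by omega
      have h2 : r^(2*(m+1)-1) * r = r^(2*(m+1)) := by rw [← pow_succ, h1]
      field_simp
      linear_combination h2
  rw [hpow]
  field_simp
  linear_combination r^(2*n+1) * key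

theorem R_bessel_ode (n : ℕ) (r : ℝ) (hr : r ≠ 0) :
    DifferentiableAt ℝ (R n) r ∧ DifferentiableAt ℝ (deriv (R n)) r ∧
      deriv (deriv (R n)) r - (2 * (n : ℝ) / r) * deriv (R n) r + R n r = 0 := by
  have hEq : R n =ᶠ[𝓝 r] FF n := by
    filter_upwards [eventually_ne_nhds hr] with x hx
    exact R_eq n hx
  have hdFF : deriv (FF n) = FF1 n := funext fun x => (hasDerivAt_FF n x).deriv
  have hdR : deriv (R n) =ᶠ[𝓝 r] FF1 n := by
    have := hEq.deriv
    rwa [hdFF] at this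
  refine ⟨(hasDerivAt_FF n r).differentiableAt.congr_of_eventuallyEq hEq,
    (hasDerivAt_FF1 n r).differentiableAt.congr_of_eventuallyEq hdR, ?_⟩
  have e1 : deriv (deriv (R n)) r = FF2 n r := by
    rw [hdR.deriv_eq, (hasDerivAt_FF1 n r).deriv]
  have e2 : deriv (R n) r = FF1 n r := hdR.self_of_nhds
  rw [e1, e2, R_eq n hr]
  exact ode_FF n hr
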